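/- Let p be real with 7/8 ≤ p ≤ 1. Then the reconstruction accuracy RA_F(T_n) = 1/2 + D_n(p)/2 of the Fitch method on the complete binary tree T_n of 2^n leaves converges, as n → ∞, to 1/2 + √((8p−7)(4p−3)) / (2(2p−1)²). -/

import Mathlib

open Filter

set_option maxHeartbeats 1000000 in
lemma inv_step (t c d c' d' : ℝ) (ht : 3/4 ≤ t) (ht1 : t < 1)
    (h1 : 0 ≤ c) (h2 : t*(1+c) ≤ 1) (h3 : 0 ≤ d) (h4 : c + d ≤ 1)
    (h5 : t*(1-2*c+3*c^2) - 2 + 2*t ≤ t^3*d^2)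
    (hc' : 2*c' = 1 - 2*c + 3*c^2 - t^2*d^2)
    (hd' : d' = t*(1+c)*d) :
    0 ≤ c' ∧ t*(1+c') ≤ 1 ∧ 0 ≤ d' ∧ c' + d' ≤ 1 ∧
      t*(1-2*c'+3*c'^2) - 2 + 2*t ≤ t^3*d'^2 := by
  have ht0 : (0:ℝ) < t := by linarith
  have hd1 : d ≤ 1 - c := by linarith
  have htd0 : 0 ≤ t*d := by positivity
  have htd : t*d ≤ 1 - c := by nlinarith
  have hsq : t^2*d^2 ≤ (1-c)^2 := by nlinarith [mul_self_le_mul_self htd0 htd]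
  have hc3 : c ≤ 1/3 := by nlinarith
  have hc'' : c' = (1 - 2*c + 3*c^2 - t^2*d^2)/2 := by linarith
  subst hc'' hd'
  refine ⟨by nlinarith, by nlinarith, by positivity, ?_, ?_⟩
  · nlinarith [sq_nonneg (1-c-t*d), mul_nonneg h1 (sub_nonneg.2 htd)]
  · -- hard part
    have hgap : 0 < 2 - 2*t - 2*t*c^2 := by
      nlinarith [mul_nonneg (mul_nonneg ht0.le h1) (by linarith : 0 ≤ 1/3 - c)]
    have hx : 0 ≤ 1 - t - t*c := by linarith
    have hH1 : 0 ≤ (4*t-3)*(1-t) := by nlinarith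
    have hH2 : 0 ≤ (1-t-t*c)*(1-t) := by nlinarith
    have hH3 : 0 ≤ (12-8*t)*((1-t-t*c)*(t*c)) := by
      have : 0 ≤ t*c := by positivity
      have h12 : (0:ℝ) ≤ 12-8*t := by linarith
      exact mul_nonneg h12 (mul_nonneg hx this)
    have hH4 : 0 ≤ (1-t-t*c)^3 := by positivity
    have hG : 0 ≤ -12+18*(1-t-t*c)-12*(1-t-t*c)^2+3*(1-t-t*c)^3+28*t
        -26*t*(1-t-t*c)+8*t*(1-t-t*c)^2-16*t^2+8*t^2*(1-t-t*c) := by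
      linarith [hH1, hH2, hH3, hH4]
    have hhi : t^3*d^2 ≤ t*(1-c)^2 := by nlinarith
    have hfhi : 0 ≤ (1-t)^2*(t+2) + t*c^2*(2*(1-t^2) - c^2*(3-t^2)) := by
      nlinarith [sq_nonneg c, mul_self_le_mul_self (mul_nonneg ht0.le h1) (by linarith : t*c ≤ 1-t),
        sq_nonneg (t*c)]
    have hA1 : 0 ≤ (t*((1-t-t*c) * (-12+18*(1-t-t*c)-12*(1-t-t*c)^2+3*(1-t-t*c)^3+28*t
        -26*t*(1-t-t*c)+8*t*(1-t-t*c)^2-16*t^2+8*t^2*(1-t-t*c)))) * (t*(1-c)^2 - t^3*d^2) :=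
      mul_nonneg (mul_nonneg ht0.le (mul_nonneg hx hG)) (by linarith)
    have hA2 : 0 ≤ (t^2*((1-t)^2*(t+2) + t*c^2*(2*(1-t^2) - c^2*(3-t^2))))
        * (t^3*d^2 - (t*(1-2*c+3*c^2) - 2 + 2*t)) :=
      mul_nonneg (mul_nonneg (by positivity) hfhi) (by linarith)
    have hA3 : 0 ≤ (3*t/4) * ((t^3*d^2 - (t*(1-2*c+3*c^2) - 2 + 2*t)) * (t*(1-c)^2 - t^3*d^2))
        * (2 - 2*t - 2*t*c^2) :=
      mul_nonneg (mul_nonneg (by positivity) (mul_nonneg (by linarith) (by linarith))) hgap.le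
    have key : 0 ≤ t^4*(1+c)^2*(t^3*d^2) + t^2*(t*(1-2*c+3*c^2) - t^3*d^2)
        - (3*t/4)*(t*(1-2*c+3*c^2) - t^3*d^2)^2 + t^2*(2-3*t) := by
      by_contra hk
      push_neg at hk
      have hm := mul_pos (neg_pos.2 hk) hgap
      linarith [hA1, hA2, hA3, hm]
    by_contra hg
    push_neg at hg
    have hm2 := mul_pos (mul_pos ht0 ht0) (sub_pos.2 hg)
    linarith [key, hm2]


theorem fitch_accuracy_tendsto
    (p : ℝ) (C D : ℕ → ℝ)
    (hC0 : C 0 = 0) (hD0 : D 0 = 1)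
    (hC : ∀ n, 2 * C (n + 1) =
        1 - 2 * C n + 3 * (C n) ^ 2 - (2 * p - 1) ^ 2 * (D n) ^ 2)
    (hD : ∀ n, D (n + 1) = (2 * p - 1) * (1 + C n) * D n)
    (hp1 : 7 / 8 ≤ p) (hp2 : p ≤ 1) :
    Tendsto (fun n => 1 / 2 + D n / 2) atTop
      (nhds (1 / 2 + Real.sqrt ((8 * p - 7) * (4 * p - 3)) / (2 * (2 * p - 1) ^ 2))) := by
  rcases eq_or_lt_of_le hp2 with hp2' | hp2'
  · -- p = 1
    subst hp2'
    have hconst : ∀ n, C n = 0 ∧ D n = 1 := by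
      intro n
      induction n with
      | zero => exact ⟨hC0, hD0⟩
      | succ n ih =>
        constructor
        · have := hC n; rw [ih.1, ih.2] at this; norm_num at this; linarith
        · rw [hD n, ih.1, ih.2]; norm_num
    have heq : (fun n : ℕ => 1 / 2 + D n / 2) = fun _ => (1:ℝ) := by
      funext n; rw [(hconst n).2]; norm_num
    rw [heq]
    have : ((8:ℝ) * 1 - 7) * (4 * 1 - 3) = 1 := by norm_num
    rw [this, Real.sqrt_one]
    norm_num
  · -- p < 1
    set t : ℝ := 2 * p - 1 with ht_def
    have ht : 3/4 ≤ t := by rw [ht_def]; linarith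
    have ht1 : t < 1 := by rw [ht_def]; linarith
    have ht0 : (0:ℝ) < t := by linarith
    have inv : ∀ n, 0 ≤ C n ∧ t*(1 + C n) ≤ 1 ∧ 0 ≤ D n ∧ C n + D n ≤ 1 ∧
        t*(1 - 2*C n + 3*(C n)^2) - 2 + 2*t ≤ t^3*(D n)^2 := by
      intro n
      induction n with
      | zero =>
        rw [hC0, hD0]
        refine ⟨le_refl 0, by linarith, by norm_num, by norm_num,
          by nlinarith [mul_nonneg (sq_nonneg (t-1)) (by linarith : (0:ℝ) ≤ t + 2)]⟩
      | succ n ih =>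
        obtain ⟨h1, h2, h3, h4, h5⟩ := ih
        exact inv_step t (C n) (D n) (C (n+1)) (D (n+1)) ht ht1 h1 h2 h3 h4 h5 (hC n) (hD n)
    have anti : ∀ n, D (n+1) ≤ D n := by
      intro n
      obtain ⟨h1, h2, h3, h4, h5⟩ := inv n
      rw [hD n]
      nlinarith
    have hAnti : Antitone D := antitone_nat_of_succ_le anti
    have hBdd : BddBelow (Set.range D) := ⟨0, by rintro _ ⟨n, rfl⟩; exact (inv n).2.2.1⟩
    set L : ℝ := ⨅ n, D n with hLdef
    have hL : Tendsto D atTop (nhds L) := tendsto_atTop_ciInf hAnti hBdd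
    have hL0 : 0 ≤ L := le_ciInf fun n => (inv n).2.2.1
    have hLle : ∀ n, L ≤ D n := fun n => ciInf_le hBdd n
    set s : ℝ := Real.sqrt ((8 * p - 7) * (4 * p - 3)) with hsdef
    have hprod : 0 ≤ (8 * p - 7) * (4 * p - 3) := by nlinarith
    have hs0 : 0 ≤ s := Real.sqrt_nonneg _
    have hs2 : s^2 = (8 * p - 7) * (4 * p - 3) := Real.sq_sqrt hprod
    have hst : s^2 = 8*t^2 - 10*t + 3 := by rw [hs2, ht_def]; ring
    -- lower bound D n ≥ s / t^2
    have hDlow : ∀ n, s ≤ t^2 * D n := by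
      intro n
      obtain ⟨h1, h2, h3, h4, h5⟩ := inv n
      have hkey : s^2 ≤ (t^2 * D n)^2 := by
        nlinarith [mul_nonneg (by linarith : (0:ℝ) ≤ 1 - t - t*C n)
          (by nlinarith : (0:ℝ) ≤ 5*t - 3 - 3*(t*C n)), h5, mul_le_mul_of_nonneg_left h5 ht0.le]
      calc s = Real.sqrt (s^2) := (Real.sqrt_sq hs0).symm
        _ ≤ Real.sqrt ((t^2 * D n)^2) := Real.sqrt_le_sqrt hkey
        _ = t^2 * D n := Real.sqrt_sq (by positivity)
    have hfinal : Tendsto (fun n => 1 / 2 + D n / 2) atTop (nhds (1/2 + L/2)) :=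
      tendsto_const_nhds.add (hL.div_const 2)
    have hLs : L = s / t^2 := by
      rcases (eq_or_lt_of_le hL0).imp Eq.symm id with hLz | hLpos
      · -- L = 0 forces s = 0
        have hsL : s ≤ t^2 * L :=
          ge_of_tendsto (hL.const_mul (t^2)) (Eventually.of_forall hDlow)
        rw [hLz] at hsL
        have hsz : s = 0 := le_antisymm (by simpa using hsL) hs0
        rw [hLz, hsz]
        simp
      · -- L > 0
        have hDpos : ∀ n, 0 < D n := fun n => lt_of_lt_of_le hLpos (hLle n)
        have hCeq : (fun n => C n) = fun n => D (n+1) / (t * D n) - 1 := by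
          funext n
          rw [hD n]
          field_simp [ne_of_gt ht0, ne_of_gt (hDpos n)]
          ring
        have h1 : Tendsto (fun n => D (n+1)) atTop (nhds L) :=
          hL.comp (tendsto_add_atTop_nat 1)
        have h2 : Tendsto (fun n => t * D n) atTop (nhds (t * L)) := hL.const_mul t
        have h3 : Tendsto (fun n => C n) atTop (nhds (L / (t * L) - 1)) := by
          rw [hCeq]
          exact (h1.div h2 (by positivity)).sub tendsto_const_nhds
        have hLtL : L / (t * L) - 1 = (1 - t)/t := by
          rw [mul_comm t L, ← div_div, div_self (ne_of_gt hLpos)]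
          field_simp
        rw [hLtL] at h3
        have hA : Tendsto (fun n => 2 * C (n+1)) atTop (nhds (2 * ((1-t)/t))) :=
          (h3.comp (tendsto_add_atTop_nat 1)).const_mul 2
        have hB : Tendsto (fun n => 1 - 2 * C n + 3 * (C n)^2 - t^2 * (D n)^2) atTop
            (nhds (1 - 2 * ((1-t)/t) + 3 * ((1-t)/t)^2 - t^2 * L^2)) := by
          have := ((tendsto_const_nhds (α := ℕ) (f := atTop) (x := (1:ℝ))).sub
            (h3.const_mul 2)).add ((h3.mul h3).const_mul 3) |>.sub
            ((hL.mul hL).const_mul (t^2))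
          convert this using 2 <;> ring
        have heqfun : (fun n => 2 * C (n+1)) = fun n => 1 - 2 * C n + 3 * (C n)^2 - t^2 * (D n)^2 := by
          funext n; exact hC n
        rw [heqfun] at hA
        have hEq := tendsto_nhds_unique hA hB
        -- derive t^4 L^2 = s^2
        have hpoly : (t^2 * L)^2 = s^2 := by
          rw [hst]
          have h0 : t ≠ 0 := ne_of_gt ht0
          field_simp at hEq
          nlinarith [hEq]
        have : t^2 * L = s := by
          calc t^2 * L = Real.sqrt ((t^2 * L)^2) := (Real.sqrt_sq (by positivity)).symm
            _ = Real.sqrt (s^2) := by rw [hpoly]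
            _ = s := Real.sqrt_sq hs0
        rw [← this]
        field_simp
    rw [hLs] at hfinal
    have hrw : s/t^2/2 = s/(2*t^2) := by rw [div_div, mul_comm]
    rw [hrw] at hfinal
    exact hfinal
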